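/- (Joint convexity of the rate-distortion functional.) Let p be a probability distribution on X, d : X × X̃ → ℝ, and β ≥ 0. Then the functional G(w,q) = Σ_{x,x̃} p(x) w(x̃|x) log( w(x̃|x)/q(x̃) ) + β Σ_{x,x̃} p(x) w(x̃|x) d(x,x̃) is jointly convex in the pair (w, q) on the convex set of pairs consisting of a conditional kernel w from X to X̃ and a strictly positive probability distribution q on X̃ (with the convention 0 · log 0 = 0). -/

import Mathlib

open Finset

/-- `G(w,q) = Σ_{x,x̃} p(x) w(x̃|x) log(w(x̃|x)/q(x̃)) + β Σ_{x,x̃} p(x) w(x̃|x) d(x,x̃)`. -/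
noncomputable def baG {X Xt : Type*} [Fintype X] [Fintype Xt]
    (p : X → ℝ) (q : Xt → ℝ) (d : X → Xt → ℝ) (β : ℝ) (w : X → Xt → ℝ) : ℝ :=
  (∑ x, ∑ t, p x * w x t * Real.log (w x t / q t))
    + β * ∑ x, ∑ t, p x * w x t * d x t

private lemma sub_le_mul_log {c d : ℝ} (hc : 0 ≤ c) (hd : 0 < d) :
    c - d ≤ c * Real.log (c / d) := by
  rcases eq_or_lt_of_le hc with h | h
  · simp [← h]; linarith
  · have h1 : Real.log (d / c) ≤ d / c - 1 := Real.log_le_sub_one_of_pos (div_pos hd h)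
    have h2 : Real.log (c / d) = - Real.log (d / c) := by
      rw [← Real.log_inv]; congr 1; field_simp
    have h3 : c * (d / c) = d := mul_div_cancel₀ d (ne_of_gt h)
    nlinarith [mul_le_mul_of_nonneg_left h1 (le_of_lt h)]

private lemma mul_log_div_mul {c d r : ℝ} (hc : 0 ≤ c) (hd : 0 < d) (hr : 0 < r) :
    c * Real.log (c / (d * r)) = c * Real.log (c / d) - c * Real.log r := by
  rcases eq_or_lt_of_le hc with h | h
  · simp [← h]
  · have : c / (d * r) = (c / d) / r := (div_div c d r).symm
    rw [this, Real.log_div (ne_of_gt (div_pos h hd)) (ne_of_gt hr)]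
    ring

private lemma logsum {c₁ c₂ d₁ d₂ : ℝ} (hc₁ : 0 ≤ c₁) (hc₂ : 0 ≤ c₂)
    (hd₁ : 0 < d₁) (hd₂ : 0 < d₂) :
    (c₁ + c₂) * Real.log ((c₁ + c₂) / (d₁ + d₂))
      ≤ c₁ * Real.log (c₁ / d₁) + c₂ * Real.log (c₂ / d₂) := by
  rcases eq_or_lt_of_le (add_nonneg hc₁ hc₂) with h | h
  · have h1 : c₁ = 0 := by linarith
    have h2 : c₂ = 0 := by linarith
    simp [h1, h2]
  · have hdd : 0 < d₁ + d₂ := by linarith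
    set r := (c₁ + c₂) / (d₁ + d₂) with hrdef
    have hr : 0 < r := div_pos h hdd
    have e1 := sub_le_mul_log hc₁ (mul_pos hd₁ hr)
    have e2 := sub_le_mul_log hc₂ (mul_pos hd₂ hr)
    rw [mul_log_div_mul hc₁ hd₁ hr] at e1
    rw [mul_log_div_mul hc₂ hd₂ hr] at e2
    have hsum : d₁ * r + d₂ * r = c₁ + c₂ := by
      rw [hrdef, ← add_mul]; exact mul_div_cancel₀ _ (ne_of_gt hdd)
    have hgoal : (c₁ + c₂) * Real.log r ≤ c₁ * Real.log (c₁ / d₁) + c₂ * Real.log (c₂ / d₂) := by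
      linarith
    exact hgoal

private lemma key_convex {u₁ u₂ v₁ v₂ a b : ℝ} (hu₁ : 0 ≤ u₁) (hu₂ : 0 ≤ u₂)
    (hv₁ : 0 < v₁) (hv₂ : 0 < v₂) (ha : 0 ≤ a) (hb : 0 ≤ b) (hab : a + b = 1) :
    (a * u₁ + b * u₂) * Real.log ((a * u₁ + b * u₂) / (a * v₁ + b * v₂))
      ≤ a * (u₁ * Real.log (u₁ / v₁)) + b * (u₂ * Real.log (u₂ / v₂)) := by
  rcases eq_or_lt_of_le ha with ha0 | ha0
  · have hb1 : b = 1 := by linarith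
    simp [← ha0, hb1]
  · rcases eq_or_lt_of_le hb with hb0 | hb0
    · have ha1 : a = 1 := by linarith
      simp [← hb0, ha1]
    · have := logsum (mul_nonneg ha hu₁) (mul_nonneg hb hu₂)
        (mul_pos ha0 hv₁) (mul_pos hb0 hv₂)
      have e1 : a * u₁ / (a * v₁) = u₁ / v₁ := mul_div_mul_left _ _ (ne_of_gt ha0)
      have e2 : b * u₂ / (b * v₂) = u₂ / v₂ := mul_div_mul_left _ _ (ne_of_gt hb0)
      rw [e1, e2] at this
      linarith [this]

/-- Joint convexity of the rate-distortion functional: for `β ≥ 0`, the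
functional `G(w,q)` is jointly convex on pairs of a conditional kernel `w` and a strictly
positive distribution `q` (with the convention `0 log 0 = 0`). -/
theorem baG_jointly_convex
    {X Xt : Type*} [Fintype X] [Fintype Xt]
    (p : X → ℝ) (hp : ∀ x, 0 ≤ p x) (hpsum : ∑ x, p x = 1)
    (d : X → Xt → ℝ) (β : ℝ) (hβ : 0 ≤ β)
    (w₁ w₂ : X → Xt → ℝ)
    (hw₁ : ∀ x t, 0 ≤ w₁ x t) (hw₁sum : ∀ x, ∑ t, w₁ x t = 1)
    (hw₂ : ∀ x t, 0 ≤ w₂ x t) (hw₂sum : ∀ x, ∑ t, w₂ x t = 1)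
    (q₁ q₂ : Xt → ℝ)
    (hq₁ : ∀ t, 0 < q₁ t) (hq₁sum : ∑ t, q₁ t = 1)
    (hq₂ : ∀ t, 0 < q₂ t) (hq₂sum : ∑ t, q₂ t = 1)
    (a b : ℝ) (ha : 0 ≤ a) (hb : 0 ≤ b) (hab : a + b = 1) :
    baG p (fun t => a * q₁ t + b * q₂ t) d β (fun x t => a * w₁ x t + b * w₂ x t)
      ≤ a * baG p q₁ d β w₁ + b * baG p q₂ d β w₂ := by
  unfold baG
  have hent : ∀ x t, p x * (a * w₁ x t + b * w₂ x t) *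
        Real.log ((a * w₁ x t + b * w₂ x t) / (a * q₁ t + b * q₂ t))
      ≤ a * (p x * w₁ x t * Real.log (w₁ x t / q₁ t))
        + b * (p x * w₂ x t * Real.log (w₂ x t / q₂ t)) := by
    intro x t
    have hk := key_convex (hw₁ x t) (hw₂ x t) (hq₁ t) (hq₂ t) ha hb hab
    have := mul_le_mul_of_nonneg_left hk (hp x)
    nlinarith [this]
  have hS : (∑ x, ∑ t, p x * (a * w₁ x t + b * w₂ x t) *
        Real.log ((a * w₁ x t + b * w₂ x t) / (a * q₁ t + b * q₂ t)))
      ≤ a * (∑ x, ∑ t, p x * w₁ x t * Real.log (w₁ x t / q₁ t))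
        + b * (∑ x, ∑ t, p x * w₂ x t * Real.log (w₂ x t / q₂ t)) := by
    calc (∑ x, ∑ t, p x * (a * w₁ x t + b * w₂ x t) *
        Real.log ((a * w₁ x t + b * w₂ x t) / (a * q₁ t + b * q₂ t)))
        ≤ ∑ x, ∑ t, (a * (p x * w₁ x t * Real.log (w₁ x t / q₁ t))
            + b * (p x * w₂ x t * Real.log (w₂ x t / q₂ t))) := by
          apply Finset.sum_le_sum; intro x _
          apply Finset.sum_le_sum; intro t _
          exact hent x t
      _ = a * (∑ x, ∑ t, p x * w₁ x t * Real.log (w₁ x t / q₁ t))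
            + b * (∑ x, ∑ t, p x * w₂ x t * Real.log (w₂ x t / q₂ t)) := by
          simp [Finset.sum_add_distrib, Finset.mul_sum]
  have hT : (∑ x, ∑ t, p x * (a * w₁ x t + b * w₂ x t) * d x t)
      = a * (∑ x, ∑ t, p x * w₁ x t * d x t)
        + b * (∑ x, ∑ t, p x * w₂ x t * d x t) := by
    simp only [Finset.mul_sum, ← Finset.sum_add_distrib]
    apply Finset.sum_congr rfl; intro x _
    apply Finset.sum_congr rfl; intro t _
    ring
  rw [hT]
  nlinarith [hS]
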